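/- Let μ₁, μ₂ be finitely supported idempotent probability measures on X with representations μ_i(φ) = max_{1≤j≤n_i}(λ_{ij} + φ(x_{ij})) (i = 1, 2), where λ_{11} = λ_{21} = 0, and let ξ⁰(Φ) = max{ Φ(x_{11}, x_{21}), max_{2≤t≤n₂}(λ_{2t} + Φ(x_{11}, x_{2t})), max_{2≤t≤n₁}(λ_{1t} + Φ(x_{1t}, x_{21})) }. Then for any subsets K ⊆ {2, …, n₁}, M ⊆ {2, …, n₂} and any choice of real numbers γ_{km} ≤ min{λ_{1k}, λ_{2m}} for k ∈ K, m ∈ M, the functional ξ(Φ) = max{ ξ⁰(Φ), max_{k∈K, m∈M}(γ_{km} + Φ(x_{1k}, x_{2m})) } is an idempotent probability measure on X × X and is a coupling of μ₁ and μ₂. -/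

import Mathlib

open Filter Topology

variable {X : Type*}

/-- An idempotent probability measure on a topological space `X`:
a functional on `C(X, ℝ)` preserving constants, shifting by constants,
and turning pointwise max into max. -/
def IsIPM [TopologicalSpace X] (μ : C(X, ℝ) → ℝ) : Prop :=
  (∀ c : ℝ, μ (ContinuousMap.const X c) = c) ∧
  (∀ (φ : C(X, ℝ)) (c : ℝ), μ (φ + ContinuousMap.const X c) = μ φ + c) ∧
  (∀ φ ψ : C(X, ℝ), μ (φ ⊔ ψ) = max (μ φ) (μ ψ))

/-- `μ` is represented as `μ(φ) = max_i (λ i + φ (x i))` with `x` pairwise distinct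
and `max_i λ i = 0`. -/
def IsRepr [TopologicalSpace X] (μ : C(X, ℝ) → ℝ) {n : ℕ}
    (x : Fin n → X) (lam : Fin n → ℝ) : Prop :=
  0 < n ∧ Function.Injective x ∧ (⨆ i, lam i) = 0 ∧
    ∀ φ : C(X, ℝ), μ φ = ⨆ i, (lam i + φ (x i))

/-- A finitely supported idempotent probability measure. -/
def IsFinSuppIPM [TopologicalSpace X] (μ : C(X, ℝ) → ℝ) : Prop :=
  ∃ (n : ℕ) (x : Fin n → X) (lam : Fin n → ℝ), IsRepr μ x lam

/-- `ξ` is a coupling of `μ1` and `μ2`: an idempotent probability measure on `X × X`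
whose marginals are `μ1` and `μ2`. -/
def IsCoupling [TopologicalSpace X] (μ1 μ2 : C(X, ℝ) → ℝ)
    (ξ : C(X × X, ℝ) → ℝ) : Prop :=
  IsIPM ξ ∧
  (∀ φ : C(X, ℝ), ξ (φ.comp ContinuousMap.fst) = μ1 φ) ∧
  (∀ φ : C(X, ℝ), ξ (φ.comp ContinuousMap.snd) = μ2 φ)

/-- A coupling matrix for weight vectors `lam1`, `lam2`: entries in `ℝ ∪ {−∞}`,
with row maxima `lam1` and column maxima `lam2`. -/
def IsCouplingMatrix {n1 n2 : ℕ} (lam1 : Fin n1 → ℝ) (lam2 : Fin n2 → ℝ)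
    (γ : Fin n1 → Fin n2 → WithBot ℝ) : Prop :=
  (∀ j, (Finset.univ.sup fun k => γ j k) = (lam1 j : WithBot ℝ)) ∧
  (∀ k, (Finset.univ.sup fun j => γ j k) = (lam2 k : WithBot ℝ))

/-- The cost `max{ |λ_{2k} − λ_{1j}| + ρ(x_{1j}, x_{2k}) : γ_{jk} ≠ −∞ }`. -/
noncomputable def matCost [MetricSpace X] {n1 n2 : ℕ}
    (x1 : Fin n1 → X) (lam1 : Fin n1 → ℝ) (x2 : Fin n2 → X) (lam2 : Fin n2 → ℝ)
    (γ : Fin n1 → Fin n2 → WithBot ℝ) : ℝ :=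
  sSup {c : ℝ | ∃ j k, γ j k ≠ ⊥ ∧ c = |lam2 k - lam1 j| + dist (x1 j) (x2 k)}

/-- `H(μ1, μ2)`: the infimum of costs over all coupling matrices
(for all representations of `μ1`, `μ2`; the representation is unique). -/
noncomputable def Hdist [MetricSpace X] (μ1 μ2 : C(X, ℝ) → ℝ) : ℝ :=
  sInf {c : ℝ | ∃ (n1 n2 : ℕ) (x1 : Fin n1 → X) (lam1 : Fin n1 → ℝ)
      (x2 : Fin n2 → X) (lam2 : Fin n2 → ℝ) (γ : Fin n1 → Fin n2 → WithBot ℝ),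
      IsRepr μ1 x1 lam1 ∧ IsRepr μ2 x2 lam2 ∧ IsCouplingMatrix lam1 lam2 γ ∧
      c = matCost x1 lam1 x2 lam2 γ}

/-- `ρ_ω(μ1, μ2) = min{diam X, H(μ1, μ2)}`. -/
noncomputable def rhoOmega [MetricSpace X] (μ1 μ2 : C(X, ℝ) → ℝ) : ℝ :=
  min (Metric.diam (Set.univ : Set X)) (Hdist μ1 μ2)


private lemma sup'_add_const {ι : Type*} (s : Finset ι) (h : s.Nonempty) (f : ι → ℝ) (c : ℝ) :
    s.sup' h (fun i => f i + c) = s.sup' h f + c := by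
  apply le_antisymm
  · exact Finset.sup'_le _ _ fun i hi => add_le_add_left (Finset.le_sup' f hi) c
  · obtain ⟨i, hi, hEq⟩ := s.exists_mem_eq_sup' h f
    rw [hEq]
    exact Finset.le_sup' (fun i => f i + c) hi

private lemma sup'_max {ι : Type*} (s : Finset ι) (h : s.Nonempty) (f g : ι → ℝ) :
    s.sup' h (fun i => max (f i) (g i)) = max (s.sup' h f) (s.sup' h g) := by
  apply le_antisymm
  · exact Finset.sup'_le _ _ fun i hi =>
      max_le_max (Finset.le_sup' f hi) (Finset.le_sup' g hi)
  · exact max_le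
      (Finset.sup'_le _ _ fun i hi =>
        le_trans (le_max_left _ _) (Finset.le_sup' (fun i => max (f i) (g i)) hi))
      (Finset.sup'_le _ _ fun i hi =>
        le_trans (le_max_right _ _) (Finset.le_sup' (fun i => max (f i) (g i)) hi))

/-- every perturbation `ξ = ξ⁰ ⊕ R(μ₁,μ₂)` by masses
`γ_{km} ≤ min{λ_{1k}, λ_{2m}}`, `k ∈ K ⊆ {2,…,n₁}`, `m ∈ M ⊆ {2,…,n₂}`,
is again a coupling of μ₁ and μ₂. -/
theorem stmt1 [MetricSpace X] [CompactSpace X]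
    (μ1 μ2 : C(X, ℝ) → ℝ) {n1 n2 : ℕ}
    (x1 : Fin n1 → X) (lam1 : Fin n1 → ℝ) (x2 : Fin n2 → X) (lam2 : Fin n2 → ℝ)
    (hn1 : 0 < n1) (hn2 : 0 < n2)
    (h1 : IsRepr μ1 x1 lam1) (h2 : IsRepr μ2 x2 lam2)
    (hl1 : lam1 ⟨0, hn1⟩ = 0) (hl2 : lam2 ⟨0, hn2⟩ = 0)
    (K : Finset (Fin n1)) (M : Finset (Fin n2))
    (hK : (⟨0, hn1⟩ : Fin n1) ∉ K) (hM : (⟨0, hn2⟩ : Fin n2) ∉ M)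
    (γ : Fin n1 → Fin n2 → ℝ)
    (hγ : ∀ k ∈ K, ∀ m ∈ M, γ k m ≤ min (lam1 k) (lam2 m)) :
    IsCoupling μ1 μ2 (fun Φ : C(X × X, ℝ) =>
      sSup (insert
        (max (Φ (x1 ⟨0, hn1⟩, x2 ⟨0, hn2⟩))
          (max (⨆ t : Fin n2, (lam2 t + Φ (x1 ⟨0, hn1⟩, x2 t)))
               (⨆ t : Fin n1, (lam1 t + Φ (x1 t, x2 ⟨0, hn2⟩)))))
        {c : ℝ | ∃ k ∈ K, ∃ m ∈ M, c = γ k m + Φ (x1 k, x2 m)})) := by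

  classical
  haveI hne1 : Nonempty (Fin n1) := ⟨⟨0, hn1⟩⟩
  haveI hne2 : Nonempty (Fin n2) := ⟨⟨0, hn2⟩⟩
  set a : X := x1 ⟨0, hn1⟩ with ha
  set b : X := x2 ⟨0, hn2⟩ with hb
  -- index type and data
  set w : (Fin n2 ⊕ Fin n1) ⊕ (Fin n1 × Fin n2) → ℝ :=
    Sum.elim (Sum.elim lam2 lam1) (fun p => γ p.1 p.2) with hw
  set pt : (Fin n2 ⊕ Fin n1) ⊕ (Fin n1 × Fin n2) → X × X :=
    Sum.elim (Sum.elim (fun t => (a, x2 t)) (fun t => (x1 t, b)))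
      (fun p => (x1 p.1, x2 p.2)) with hpt
  set T : Finset ((Fin n2 ⊕ Fin n1) ⊕ (Fin n1 × Fin n2)) :=
    ((Finset.univ.disjSum Finset.univ).disjSum (K ×ˢ M)) with hTdef
  have hmemll : ∀ t : Fin n2, Sum.inl (Sum.inl t) ∈ T := by
    intro t; simp [hTdef]
  have hmemlr : ∀ t : Fin n1, Sum.inl (Sum.inr t) ∈ T := by
    intro t; simp [hTdef]
  have hmemr : ∀ k m, k ∈ K → m ∈ M → Sum.inr (k, m) ∈ T := by
    intro k m hk hm; simp [hTdef, Finset.mem_product, hk, hm]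
  have hT : T.Nonempty := ⟨Sum.inl (Sum.inl ⟨0, hn2⟩), hmemll _⟩
  have hlam1_le : ∀ t, lam1 t ≤ 0 := by
    intro t
    rw [← h1.2.2.1]
    exact le_ciSup (Set.Finite.bddAbove (Set.finite_range _)) t
  have hlam2_le : ∀ t, lam2 t ≤ 0 := by
    intro t
    rw [← h2.2.2.1]
    exact le_ciSup (Set.Finite.bddAbove (Set.finite_range _)) t
  -- the key rewriting of the functional
  have key : ∀ Φ : C(X × X, ℝ),
      sSup (insert
        (max (Φ (a, b))
          (max (⨆ t : Fin n2, (lam2 t + Φ (a, x2 t)))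
               (⨆ t : Fin n1, (lam1 t + Φ (x1 t, b)))))
        {c : ℝ | ∃ k ∈ K, ∃ m ∈ M, c = γ k m + Φ (x1 k, x2 m)})
      = T.sup' hT (fun i => w i + Φ (pt i)) := by
    intro Φ
    set A : ℝ := max (Φ (a, b))
          (max (⨆ t : Fin n2, (lam2 t + Φ (a, x2 t)))
               (⨆ t : Fin n1, (lam1 t + Φ (x1 t, b)))) with hA
    set S : Set ℝ := {c : ℝ | ∃ k ∈ K, ∃ m ∈ M, c = γ k m + Φ (x1 k, x2 m)} with hS
    have hSsub : S ⊆ Set.range (fun p : Fin n1 × Fin n2 => γ p.1 p.2 + Φ (x1 p.1, x2 p.2)) := by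
      rintro c ⟨k, hk, m, hm, rfl⟩
      exact ⟨(k, m), rfl⟩
    have hfin : (insert A S).Finite :=
      Set.Finite.insert _ ((Set.finite_range _).subset hSsub)
    have hbdd : BddAbove (insert A S) := hfin.bddAbove
    have hAmem : A ∈ insert A S := Set.mem_insert _ _
    apply le_antisymm
    · apply csSup_le ⟨A, hAmem⟩
      rintro y (rfl | ⟨k, hk, m, hm, rfl⟩)
      · apply max_le
        · have h0 : Φ (a, b) = w (Sum.inl (Sum.inl ⟨0, hn2⟩))
              + Φ (pt (Sum.inl (Sum.inl ⟨0, hn2⟩))) := by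
            simp [hw, hpt, hl2, hb]
          rw [h0]
          exact Finset.le_sup' (fun i => w i + Φ (pt i)) (hmemll _)
        · apply max_le
          · apply ciSup_le
            intro t
            exact Finset.le_sup' (fun i => w i + Φ (pt i)) (hmemll t)
          · apply ciSup_le
            intro t
            exact Finset.le_sup' (fun i => w i + Φ (pt i)) (hmemlr t)
      · exact Finset.le_sup' (fun i => w i + Φ (pt i)) (hmemr k m hk hm)
    · apply Finset.sup'_le
      rintro ((t | t) | ⟨k, m⟩) hi
      · refine le_trans ?_ (le_csSup hbdd hAmem)
        refine le_trans ?_ (le_max_of_le_right (le_max_left _ _))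
        exact le_ciSup (f := fun t => lam2 t + Φ (a, x2 t))
          (Set.Finite.bddAbove (Set.finite_range _)) t
      · refine le_trans ?_ (le_csSup hbdd hAmem)
        refine le_trans ?_ (le_max_of_le_right (le_max_right _ _))
        exact le_ciSup (f := fun t => lam1 t + Φ (x1 t, b))
          (Set.Finite.bddAbove (Set.finite_range _)) t
      · have hk : k ∈ K ∧ m ∈ M := by
          simpa [hTdef, Finset.mem_product] using hi
        exact le_csSup hbdd (Set.mem_insert_of_mem _ ⟨k, hk.1, m, hk.2, rfl⟩)
  have hw0 : T.sup' hT w = 0 := by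
    apply le_antisymm
    · apply Finset.sup'_le
      rintro ((t | t) | ⟨k, m⟩) hi
      · exact hlam2_le t
      · exact hlam1_le t
      · have hk : k ∈ K ∧ m ∈ M := by
          simpa [hTdef, Finset.mem_product] using hi
        calc γ k m ≤ min (lam1 k) (lam2 m) := hγ k hk.1 m hk.2
          _ ≤ lam1 k := min_le_left _ _
          _ ≤ 0 := hlam1_le k
    · have : (0 : ℝ) = w (Sum.inl (Sum.inl ⟨0, hn2⟩)) := by simp [hw, hl2]
      rw [this]
      exact Finset.le_sup' w (hmemll _)
  refine ⟨⟨?_, ?_, ?_⟩, ?_, ?_⟩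
  · -- constants
    intro c
    simp only []
    rw [key]
    have : (fun i => w i + (ContinuousMap.const (X × X) c) (pt i))
        = fun i => w i + c := by funext i; simp
    rw [this, sup'_add_const, hw0, zero_add]
  · -- shift by constants
    intro Φ c
    simp only []
    rw [key, key]
    have : (fun i => w i + (Φ + ContinuousMap.const (X × X) c) (pt i))
        = fun i => (w i + Φ (pt i)) + c := by
      funext i; simp [add_assoc]
    rw [this, sup'_add_const]
  · -- max
    intro Φ ψ
    simp only []
    rw [key, key, key]
    have : (fun i => w i + (Φ ⊔ ψ) (pt i))
        = fun i => max (w i + Φ (pt i)) (w i + ψ (pt i)) := by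
      funext i
      simp [max_add_add_left]
    rw [this, sup'_max]
  · -- first marginal
    intro φ
    simp only []
    rw [key, h1.2.2.2 φ, ← Finset.sup'_univ_eq_ciSup]
    apply le_antisymm
    · apply Finset.sup'_le
      rintro ((t | t) | ⟨k, m⟩) hi
      · have h0 : w (Sum.inl (Sum.inl t)) + (φ.comp ContinuousMap.fst) (pt (Sum.inl (Sum.inl t)))
            = lam2 t + φ a := by simp [hw, hpt]
        rw [h0]
        calc lam2 t + φ a ≤ 0 + φ a := add_le_add_left (hlam2_le t) _
          _ = lam1 ⟨0, hn1⟩ + φ (x1 ⟨0, hn1⟩) := by rw [hl1, ha]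
          _ ≤ _ := Finset.le_sup' (fun t => lam1 t + φ (x1 t)) (Finset.mem_univ _)
      · exact Finset.le_sup' (fun t => lam1 t + φ (x1 t)) (Finset.mem_univ t)
      · have hk : k ∈ K ∧ m ∈ M := by
          simpa [hTdef, Finset.mem_product] using hi
        have h0 : w (Sum.inr (k, m)) + (φ.comp ContinuousMap.fst) (pt (Sum.inr (k, m)))
            = γ k m + φ (x1 k) := by simp [hw, hpt]
        rw [h0]
        calc γ k m + φ (x1 k) ≤ lam1 k + φ (x1 k) :=
              add_le_add_left (le_trans (hγ k hk.1 m hk.2) (min_le_left _ _)) _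
          _ ≤ _ := Finset.le_sup' (fun t => lam1 t + φ (x1 t)) (Finset.mem_univ k)
    · apply Finset.sup'_le
      intro t _
      have h0 : lam1 t + φ (x1 t)
          = w (Sum.inl (Sum.inr t)) + (φ.comp ContinuousMap.fst) (pt (Sum.inl (Sum.inr t))) := by
        simp [hw, hpt]
      rw [h0]
      exact Finset.le_sup' (fun i => w i + (φ.comp ContinuousMap.fst) (pt i)) (hmemlr t)
  · -- second marginal
    intro φ
    simp only []
    rw [key, h2.2.2.2 φ, ← Finset.sup'_univ_eq_ciSup]
    apply le_antisymm
    · apply Finset.sup'_le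
      rintro ((t | t) | ⟨k, m⟩) hi
      · exact Finset.le_sup' (fun t => lam2 t + φ (x2 t)) (Finset.mem_univ t)
      · have h0 : w (Sum.inl (Sum.inr t)) + (φ.comp ContinuousMap.snd) (pt (Sum.inl (Sum.inr t)))
            = lam1 t + φ b := by simp [hw, hpt]
        rw [h0]
        calc lam1 t + φ b ≤ 0 + φ b := add_le_add_left (hlam1_le t) _
          _ = lam2 ⟨0, hn2⟩ + φ (x2 ⟨0, hn2⟩) := by rw [hl2, hb]
          _ ≤ _ := Finset.le_sup' (fun t => lam2 t + φ (x2 t)) (Finset.mem_univ _)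
      · have hk : k ∈ K ∧ m ∈ M := by
          simpa [hTdef, Finset.mem_product] using hi
        have h0 : w (Sum.inr (k, m)) + (φ.comp ContinuousMap.snd) (pt (Sum.inr (k, m)))
            = γ k m + φ (x2 m) := by simp [hw, hpt]
        rw [h0]
        calc γ k m + φ (x2 m) ≤ lam2 m + φ (x2 m) :=
              add_le_add_left (le_trans (hγ k hk.1 m hk.2) (min_le_right _ _)) _
          _ ≤ _ := Finset.le_sup' (fun t => lam2 t + φ (x2 t)) (Finset.mem_univ m)
    · apply Finset.sup'_le
      intro t _
      have h0 : lam2 t + φ (x2 t)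
          = w (Sum.inl (Sum.inl t)) + (φ.comp ContinuousMap.snd) (pt (Sum.inl (Sum.inl t))) := by
        simp [hw, hpt]
      rw [h0]
      exact Finset.le_sup' (fun i => w i + (φ.comp ContinuousMap.snd) (pt i)) (hmemll t)
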